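/- Let p ≥ 3 be prime, a ∈ ℚ_p with 0 < |a|_p < 1, and c ∈ ℚ_p with c² = -a. Then φ(1/c) = 0 and φ(-1/c) = 0, and for all x, y in the closed disk D(1/c, 1/(p·|c|_p)) = {z : |z - 1/c|_p ≤ 1/(p|c|_p)}, one has |φ(x) - φ(y)|_p = |a|_p · |x - y|_p, where φ(z) = a·z + 1/z. -/

import Mathlib

theorem stmt11 (p : ℕ) [Fact p.Prime] (hp : 3 ≤ p) (a c : ℚ_[p])
    (ha0 : 0 < ‖a‖) (ha1 : ‖a‖ < 1) (hc : c ^ 2 = -a) :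
    (a * (1 / c) + 1 / (1 / c) = 0) ∧
    (a * (-(1 / c)) + 1 / (-(1 / c)) = 0) ∧
    (∀ x y : ℚ_[p],
      ‖x - 1 / c‖ ≤ 1 / (p * ‖c‖) → ‖y - 1 / c‖ ≤ 1 / (p * ‖c‖) →
      ‖(a * x + 1 / x) - (a * y + 1 / y)‖ = ‖a‖ * ‖x - y‖) := by
  have hane : a ≠ 0 := by
    intro h; rw [h] at ha0; simp at ha0
  have hcne : c ≠ 0 := by
    intro h; rw [h] at hc; simp at hc; exact hane hc
  have hcpos : (0:ℝ) < ‖c‖ := norm_pos_iff.mpr hcne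
  have hca : ‖c‖ ^ 2 = ‖a‖ := by
    have := congrArg norm hc
    rwa [norm_pow, norm_neg] at this
  have hp1 : (1:ℝ) < p := by
    have : (3:ℝ) ≤ p := by exact_mod_cast hp
    linarith
  have h2 : ‖(2:ℚ_[p])‖ = 1 := by
    have hle : ‖((2:ℤ) : ℚ_[p])‖ ≤ 1 := Padic.norm_int_le_one 2
    have hnlt : ¬ ‖((2:ℤ) : ℚ_[p])‖ < 1 := by
      rw [Padic.norm_intCast_lt_one_iff]
      intro hdvd
      have := Int.le_of_dvd (by norm_num) hdvd
      omega
    push_cast at hle hnlt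
    linarith
  refine ⟨by field_simp; linear_combination hc, ?_, ?_⟩
  · field_simp
    linear_combination -hc
  intro x y hx hy
  have hinv : ‖(1/c : ℚ_[p])‖ = 1/‖c‖ := by rw [norm_div, norm_one]
  have hr : 1/(p*‖c‖) < 1/‖c‖ := by
    apply div_lt_div_of_pos_left one_pos hcpos
    nlinarith
  have hxnorm : ‖x‖ = 1/‖c‖ := by
    have h1 : ‖x - 1/c‖ < ‖(1/c:ℚ_[p])‖ := by rw [hinv]; exact lt_of_le_of_lt hx hr
    have := Padic.add_eq_max_of_ne (ne_of_lt h1)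
    rw [sub_add_cancel] at this
    rw [this, max_eq_right (le_of_lt h1), hinv]
  have hynorm : ‖y‖ = 1/‖c‖ := by
    have h1 : ‖y - 1/c‖ < ‖(1/c:ℚ_[p])‖ := by rw [hinv]; exact lt_of_le_of_lt hy hr
    have := Padic.add_eq_max_of_ne (ne_of_lt h1)
    rw [sub_add_cancel] at this
    rw [this, max_eq_right (le_of_lt h1), hinv]
  have hxne : x ≠ 0 := by
    intro h; rw [h, norm_zero] at hxnorm
    have := one_div_pos.mpr hcpos; linarith
  have hyne : y ≠ 0 := by
    intro h; rw [h, norm_zero] at hynorm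
    have := one_div_pos.mpr hcpos; linarith
  set u := x - 1/c with hu
  set v := y - 1/c with hv
  have hcu : ‖c*u‖ ≤ 1/p := by
    rw [norm_mul]
    calc ‖c‖ * ‖u‖ ≤ ‖c‖ * (1/(p*‖c‖)) := by
          exact mul_le_mul_of_nonneg_left hx (le_of_lt hcpos)
      _ = 1/p := by field_simp
  have hcv : ‖c*v‖ ≤ 1/p := by
    rw [norm_mul]
    calc ‖c‖ * ‖v‖ ≤ ‖c‖ * (1/(p*‖c‖)) := by
          exact mul_le_mul_of_nonneg_left hy (le_of_lt hcpos)
      _ = 1/p := by field_simp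
  have hppos : (0:ℝ) < 1/p := by positivity
  have hp1' : 1/(p:ℝ) < 1 := by rw [div_lt_one (by linarith)]; linarith
  have hcuv : ‖c^2*u*v‖ ≤ 1/p := by
    have : c^2*u*v = (c*u)*(c*v) := by ring
    rw [this, norm_mul]
    calc ‖c*u‖ * ‖c*v‖ ≤ (1/p) * (1/p) :=
          mul_le_mul hcu hcv (norm_nonneg _) (le_of_lt hppos)
      _ ≤ 1/p * 1 := by nlinarith
      _ = 1/p := mul_one _
  set w := c*u + c*v + c^2*u*v with hwdef
  have hw : ‖w‖ ≤ 1/p := by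
    calc ‖w‖ ≤ max ‖c*u + c*v‖ ‖c^2*u*v‖ := Padic.nonarchimedean _ _
      _ ≤ max (max ‖c*u‖ ‖c*v‖) ‖c^2*u*v‖ :=
          max_le_max (Padic.nonarchimedean _ _) le_rfl
      _ ≤ 1/p := by
          apply max_le (max_le hcu hcv) hcuv
  have hw1 : ‖w‖ < 1 := lt_of_le_of_lt hw hp1'
  set D := (1 + c*u) * (1 + c*v) with hDdef
  have hD1 : D = 1 + w := by rw [hDdef, hwdef]; ring
  have hDnorm : ‖D‖ = 1 := by
    rw [hD1]
    have hne : ‖(1:ℚ_[p])‖ ≠ ‖w‖ := by rw [norm_one]; exact (ne_of_lt hw1).symm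
    rw [Padic.add_eq_max_of_ne hne, norm_one, max_eq_left (le_of_lt hw1)]
  have hDne : D ≠ 0 := by
    intro h; rw [h, norm_zero] at hDnorm; norm_num at hDnorm
  have h2w : ‖(2:ℚ_[p]) + w‖ = 1 := by
    have hne : ‖(2:ℚ_[p])‖ ≠ ‖w‖ := by rw [h2]; exact (ne_of_lt hw1).symm
    rw [Padic.add_eq_max_of_ne hne, h2, max_eq_left (by rw [← h2] at hw1 ⊢; exact le_of_lt hw1)]
  have hcx : c * x = 1 + c*u := by rw [hu]; field_simp; ring
  have hcy : c * y = 1 + c*v := by rw [hv]; field_simp; ring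
  have hD : D = c^2*x*y := by rw [hDdef, ← hcx, ← hcy]; ring
  have hw' : w = c^2*x*y - 1 := by linear_combination hD - hD1
  have hkey : a - 1/(x*y) = -(c^2 * (2 + w)) / D := by
    rw [hw', hD]
    field_simp
    linear_combination (x*y)*hc
  have hfact : (a * x + 1 / x) - (a * y + 1 / y) = (x - y) * (a - 1/(x*y)) := by
    field_simp
    ring
  rw [hfact, norm_mul, hkey, norm_div, norm_neg, norm_mul, norm_pow, hca, h2w, hDnorm]
  ring
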